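/- Let C^trop : ℝ → 𝕋^d be defined so that C^trop(λ) is the coordinatewise maximum (barycenter) of a tropically convex set P intersected with {x | f(x) ≤ λ}, where f(x) = max_k (c_k + x_k) for a fixed c ∈ 𝕋^d. Then C^trop is monotone and 1-Lipschitz: for λ ≤ λ' the barycenter b(λ) of the λ-sublevel set and b(λ') of the λ'-sublevel set satisfy b(λ)_k ≤ b(λ')_k ≤ b(λ)_k + (λ' − λ) for all coordinates k, provided both barycenters exist and f takes finite value on them. -/

import Mathlib

/-- Tropical convexity in `𝕋^d` with `𝕋 = ℝ ∪ {-∞}` embedded in `EReal`. -/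
def TropConvex {d : ℕ} (C : Set (Fin d → EReal)) : Prop :=
  ∀ u ∈ C, ∀ v ∈ C, ∀ a b : EReal, max a b = 0 →
    (fun i => max (a + u i) (b + v i)) ∈ C

/-- Monotonicity and 1-Lipschitz property of the tropical central path: if `b` and `b'` are
the tropical barycenters of the sublevel sets `P ∩ {f ≤ λ}` and `P ∩ {f ≤ λ'}` for
`f(x) = max_k (c_k + x_k)` and `λ ≤ λ'`, then `b_k ≤ b'_k ≤ b_k + (λ' - λ)`. -/
theorem tropical_central_path_monotone_lipschitz {d : ℕ}
    (P : Set (Fin d → EReal)) (hP : TropConvex P) (c : Fin d → EReal)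
    (lam lam' : ℝ) (hll : lam ≤ lam') (b b' : Fin d → EReal)
    (hbP : b ∈ P) (hbf : (⨆ k, c k + b k) ≤ (lam : EReal))
    (hbmax : ∀ x ∈ P, (⨆ k, c k + x k) ≤ (lam : EReal) → x ≤ b)
    (hb'P : b' ∈ P) (hb'f : (⨆ k, c k + b' k) ≤ (lam' : EReal))
    (hb'max : ∀ x ∈ P, (⨆ k, c k + x k) ≤ (lam' : EReal) → x ≤ b')
    (hfb : (⨆ k, c k + b k) ≠ ⊥) (hfb' : (⨆ k, c k + b' k) ≠ ⊥) :
    ∀ k, b k ≤ b' k ∧ b' k ≤ b k + ((lam' - lam : ℝ) : EReal) := by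
  intro k
  constructor
  · -- monotonicity
    have hb' : b ≤ b' := hb'max b hbP (hbf.trans (by exact_mod_cast EReal.coe_le_coe_iff.2 hll))
    exact hb' k
  · -- Lipschitz: use the tropical combination z = b ⊕ ((lam-lam') ⊙ b')
    set e : EReal := ((lam - lam' : ℝ) : EReal) with he
    have hmax : max (0 : EReal) e = 0 := by
      rw [max_eq_left]
      rw [he]
      exact_mod_cast sub_nonpos.2 hll
    have hz : (fun i => max ((0 : EReal) + b i) (e + b' i)) ∈ P :=
      hP b hbP b' hb'P 0 e hmax
    have hzf : (⨆ i, c i + max ((0 : EReal) + b i) (e + b' i)) ≤ (lam : EReal) := by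
      refine iSup_le fun i => ?_
      rw [zero_add]
      have h1 : c i + b i ≤ (lam : EReal) := le_trans (le_iSup (fun j => c j + b j) i) hbf
      have h2 : c i + (e + b' i) ≤ (lam : EReal) := by
        have : c i + (e + b' i) = e + (c i + b' i) := by
          rw [← add_assoc, add_comm (c i) e, add_assoc]
        rw [this]
        have hbi : c i + b' i ≤ (lam' : EReal) := le_trans (le_iSup (fun j => c j + b' j) i) hb'f
        calc e + (c i + b' i) ≤ e + (lam' : EReal) := add_le_add_right hbi e
          _ = (lam : EReal) := by
              rw [he, ← EReal.coe_add]; norm_num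
      calc c i + max (b i) (e + b' i) = max (c i + b i) (c i + (e + b' i)) := by
            rcases le_total (b i) (e + b' i) with h | h
            · rw [max_eq_right h, max_eq_right (add_le_add_right h _)]
            · rw [max_eq_left h, max_eq_left (add_le_add_right h _)]
        _ ≤ (lam : EReal) := max_le h1 h2
    have hzb := hbmax _ hz hzf
    have hk := hzb k
    simp only [zero_add] at hk
    have h3 : e + b' k ≤ b k := le_trans (le_max_right _ _) hk
    have h4 : ((lam' - lam : ℝ) : EReal) + (e + b' k) ≤ ((lam' - lam : ℝ) : EReal) + b k :=
      add_le_add_right h3 _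
    have h5 : ((lam' - lam : ℝ) : EReal) + (e + b' k) = b' k := by
      rw [he, ← add_assoc, ← EReal.coe_add]
      norm_num
    rw [h5] at h4
    rw [add_comm] at h4
    exact h4
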